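/- Let E, F, G be n×n real symmetric matrices with F ≠ 0, F ⪰ 0, G ⪰ 0, and ker(G) ⊆ ker(F) ∩ ker(E). Let P be the orthogonal projection of ℝⁿ onto ker(F). Then there exists ε < 0 such that for each δ ∈ [ε, 0) there exists λ_δ < 0 such that for all λ ≤ λ_δ, the number of strictly positive eigenvalues of E + λF + δG equals the number of strictly positive eigenvalues of P·E·P. -/

import Mathlib

open Matrix Module Submodule

/-- The number of strictly positive eigenvalues (with multiplicity) of a real symmetric
(Hermitian) matrix; `0` for non-Hermitian matrices. -/
noncomputable def posIdx {n : Type*} [Fintype n] [DecidableEq n] (A : Matrix n n ℝ) : ℕ :=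
  if h : A.IsHermitian then Fintype.card {i // 0 < h.eigenvalues i} else 0

variable {n : ℕ}

lemma posIdx_eq {A : Matrix (Fin n) (Fin n) ℝ} (hA : A.IsHermitian) :
    posIdx A = Fintype.card {i // 0 < hA.eigenvalues i} := by
  rw [posIdx, dif_pos hA]


lemma qf_eq_inner (A : Matrix (Fin n) (Fin n) ℝ) (x : EuclideanSpace ℝ (Fin n)) :
    dotProduct (x : Fin n → ℝ) (A.mulVec x) = @inner ℝ _ _ x ((toEuclideanLin A) x) := by
  rw [toEuclideanLin_apply]
  simp only [PiLp.inner_apply, RCLike.inner_apply, starRingEnd_apply, star_trivial, dotProduct]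
  exact Finset.sum_congr rfl fun _ _ => mul_comm _ _

lemma repr_toEuclideanLin {A : Matrix (Fin n) (Fin n) ℝ} (hA : A.IsHermitian) (x : EuclideanSpace ℝ (Fin n)) (i : Fin n) :
    hA.eigenvectorBasis.repr ((toEuclideanLin A) x) i
      = hA.eigenvalues i * hA.eigenvectorBasis.repr x i := by
  set b := hA.eigenvectorBasis with hb
  have key : ∀ j, (toEuclideanLin A) (b j) = hA.eigenvalues j • b j := by
    intro j
    have := hA.mulVec_eigenvectorBasis j
    rw [toEuclideanLin_apply]
    apply (WithLp.equiv 2 (Fin n → ℝ)).injective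
    simpa using this
  conv_lhs => rw [← b.sum_repr x, map_sum]
  simp only [_root_.map_smul, key]
  rw [map_sum]
  simp only [_root_.map_smul, b.repr_self]
  rw [show ((∑ j : Fin n, b.repr x j • hA.eigenvalues j • EuclideanSpace.single j (1:ℝ)) : EuclideanSpace ℝ (Fin n)) i = ∑ j : Fin n, (b.repr x j • hA.eigenvalues j • EuclideanSpace.single j (1:ℝ) : EuclideanSpace ℝ (Fin n)) i from by rw [WithLp.ofLp_sum]; exact Finset.sum_apply i Finset.univ _]
  simp [EuclideanSpace.single_apply, smul_smul, Finset.sum_ite_eq', mul_comm]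

lemma qf_eq_sum (A : Matrix (Fin n) (Fin n) ℝ) (hA : A.IsHermitian) (x : EuclideanSpace ℝ (Fin n)) :
    dotProduct (x : Fin n → ℝ) (A.mulVec x)
      = ∑ i, hA.eigenvalues i * (hA.eigenvectorBasis.repr x i)^2 := by
  rw [qf_eq_inner]
  rw [← hA.eigenvectorBasis.repr.inner_map_map x ((toEuclideanLin A) x)]
  simp only [PiLp.inner_apply, RCLike.inner_apply, starRingEnd_apply, star_trivial]
  refine Finset.sum_congr rfl fun i _ => ?_
  rw [repr_toEuclideanLin hA x i]
  ring


lemma mem_span_orthoBasis (b : OrthonormalBasis (Fin n) ℝ (EuclideanSpace ℝ (Fin n)))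
    (S : Set (Fin n)) (x : EuclideanSpace ℝ (Fin n)) :
    x ∈ span ℝ (⇑b '' S) ↔ ∀ i ∉ S, b.repr x i = 0 := by
  have h1 : (⇑b '' S) = (⇑b.toBasis '' S) := by rw [OrthonormalBasis.coe_toBasis]
  rw [h1, Basis.mem_span_image, Finsupp.support_subset_iff]
  simp [OrthonormalBasis.coe_toBasis_repr_apply]

lemma finrank_span_orthoBasis (b : OrthonormalBasis (Fin n) ℝ (EuclideanSpace ℝ (Fin n)))
    (S : Set (Fin n)) [DecidablePred (· ∈ S)] :
    finrank ℝ (span ℝ (⇑b '' S)) = Fintype.card S := by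
  have h2 : ⇑b '' S = Set.range (fun i : S => b i) := by
    ext y; simp [Set.range]
  rw [h2, finrank_span_eq_card]
  exact b.orthonormal.linearIndependent.comp _ Subtype.val_injective

section sketch
variable {A : Matrix (Fin n) (Fin n) ℝ}


theorem spectral_subspaces (hA : A.IsHermitian) :
    ∃ Wp Wm : Submodule ℝ (EuclideanSpace ℝ (Fin n)),
      finrank ℝ Wp = posIdx A ∧
      finrank ℝ Wm + posIdx A = n ∧
      (∀ x : EuclideanSpace ℝ (Fin n), x ∈ Wp → x ≠ 0 →
        0 < dotProduct (x : Fin n → ℝ) (A.mulVec x)) ∧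
      (∀ x : EuclideanSpace ℝ (Fin n), x ∈ Wm →
        dotProduct (x : Fin n → ℝ) (A.mulVec x) ≤ 0) ∧
      (∀ x : EuclideanSpace ℝ (Fin n), A.mulVec x = 0 → x ∈ Wm) := by
  classical
  set b := hA.eigenvectorBasis with hb
  set S : Set (Fin n) := {i | 0 < hA.eigenvalues i} with hS
  have hcard : Fintype.card S = posIdx A := by
    rw [posIdx_eq hA]
    exact Fintype.card_congr (Equiv.subtypeEquivRight fun i => Iff.rfl)
  refine ⟨span ℝ (⇑b '' S), span ℝ (⇑b '' Sᶜ), ?_, ?_, ?_, ?_, ?_⟩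
  · rw [finrank_span_orthoBasis, hcard]
  · rw [finrank_span_orthoBasis, ← hcard]
    have : Fintype.card ↥(Sᶜ) = Fintype.card (Fin n) - Fintype.card ↥S :=
      Fintype.card_compl_set S
    rw [this, Fintype.card_fin]
    have hle : Fintype.card ↥S ≤ n := by
      simpa using Fintype.card_subtype_le (fun i => i ∈ S)
    omega
  · intro x hx hx0
    rw [qf_eq_sum A hA]
    have hrepr : ∀ i ∉ S, b.repr x i = 0 := (mem_span_orthoBasis b S x).1 hx
    have hex : ∃ i, b.repr x i ≠ 0 := by
      by_contra h
      push_neg at h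
      apply hx0
      have : b.repr x = 0 := by ext i; exact h i
      simpa using congrArg b.repr.symm this
    obtain ⟨i, hi⟩ := hex
    have hiS : i ∈ S := by by_contra hiS; exact hi (hrepr i hiS)
    refine Finset.sum_pos' (fun j _ => ?_) ⟨i, Finset.mem_univ i, ?_⟩
    · by_cases hj : j ∈ S
      · have hj' : (0:ℝ) < hA.eigenvalues j := hj
        exact mul_nonneg hj'.le (sq_nonneg _)
      · rw [← hb]; simp [hrepr j hj]
    · have hiS' : (0:ℝ) < hA.eigenvalues i := hiS
      exact mul_pos hiS' (by positivity)
  · intro x hx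
    rw [qf_eq_sum A hA]
    have hrepr : ∀ i ∉ Sᶜ, b.repr x i = 0 := (mem_span_orthoBasis b Sᶜ x).1 hx
    apply Finset.sum_nonpos
    intro j _
    by_cases hj : j ∈ Sᶜ
    · have : hA.eigenvalues j ≤ 0 := not_lt.1 hj
      exact mul_nonpos_of_nonpos_of_nonneg this (sq_nonneg _)
    · rw [← hb]; simp [hrepr j hj]
  · intro x hx
    rw [mem_span_orthoBasis]
    intro i hiS
    have hiS' : i ∈ S := not_not.1 (by simpa using hiS)
    have h0 : (toEuclideanLin A) x = 0 := by
      rw [toEuclideanLin_apply]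
      have : (WithLp.equiv 2 (Fin n → ℝ)) x = (x : Fin n → ℝ) := rfl
      rw [hx]
      rfl
    have hkey := repr_toEuclideanLin hA x i
    rw [h0] at hkey
    simp only [map_zero] at hkey
    have h0' : (0:ℝ) = hA.eigenvalues i * b.repr x i := by simpa using hkey
    have hpos : (0:ℝ) < hA.eigenvalues i := hiS'
    have := h0'.symm
    rcases mul_eq_zero.1 this with h | h
    · exact absurd h hpos.ne'
    · exact h
end sketch

lemma disjoint_of_qf {A : Matrix (Fin n) (Fin n) ℝ}
    {W U : Submodule ℝ (EuclideanSpace ℝ (Fin n))}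
    (hW : ∀ x : EuclideanSpace ℝ (Fin n), x ∈ W → x ≠ 0 →
      0 < dotProduct (x : Fin n → ℝ) (A.mulVec x))
    (hU : ∀ x : EuclideanSpace ℝ (Fin n), x ∈ U →
      dotProduct (x : Fin n → ℝ) (A.mulVec x) ≤ 0) :
    W ⊓ U = ⊥ := by
  rw [Submodule.eq_bot_iff]
  rintro x ⟨hxW, hxU⟩
  by_contra hx0
  exact absurd (hU x hxU) (not_le.2 (hW x hxW hx0))

lemma posIdx_add_le {A : Matrix (Fin n) (Fin n) ℝ} (hA : A.IsHermitian)
    (U : Submodule ℝ (EuclideanSpace ℝ (Fin n)))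
    (hU : ∀ x : EuclideanSpace ℝ (Fin n), x ∈ U →
      dotProduct (x : Fin n → ℝ) (A.mulVec x) ≤ 0) :
    posIdx A + finrank ℝ U ≤ n := by
  obtain ⟨Wp, Wm, h1, h2, h3, h4, h5⟩ := spectral_subspaces hA
  have hdisj : Wp ⊓ U = ⊥ := disjoint_of_qf h3 hU
  have := Submodule.finrank_sup_add_finrank_inf_eq Wp U
  rw [hdisj] at this
  simp only [finrank_bot, add_zero] at this
  have hle : finrank ℝ ↥(Wp ⊔ U) ≤ n := by
    have := Submodule.finrank_le (Wp ⊔ U)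
    simpa [finrank_euclideanSpace] using this
  omega

lemma le_posIdx {A : Matrix (Fin n) (Fin n) ℝ} (hA : A.IsHermitian)
    (W : Submodule ℝ (EuclideanSpace ℝ (Fin n)))
    (hW : ∀ x : EuclideanSpace ℝ (Fin n), x ∈ W → x ≠ 0 →
      0 < dotProduct (x : Fin n → ℝ) (A.mulVec x)) :
    finrank ℝ W ≤ posIdx A := by
  obtain ⟨Wp, Wm, h1, h2, h3, h4, h5⟩ := spectral_subspaces hA
  have hdisj : W ⊓ Wm = ⊥ := disjoint_of_qf hW h4
  have := Submodule.finrank_sup_add_finrank_inf_eq W Wm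
  rw [hdisj] at this
  simp only [finrank_bot, add_zero] at this
  have hle : finrank ℝ ↥(W ⊔ Wm) ≤ n := by
    have := Submodule.finrank_le (W ⊔ Wm)
    simpa [finrank_euclideanSpace] using this
  omega

lemma dot_eq_inner' (M : Matrix (Fin n) (Fin n) ℝ) (x y : EuclideanSpace ℝ (Fin n)) :
    dotProduct (x : Fin n → ℝ) (M.mulVec y) = @inner ℝ _ _ x ((toEuclideanLin M) y) := by
  rw [toEuclideanLin_apply]
  simp only [PiLp.inner_apply, RCLike.inner_apply, starRingEnd_apply, star_trivial, dotProduct]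
  exact Finset.sum_congr rfl fun _ _ => mul_comm _ _

lemma exists_bilin_bound (M : Matrix (Fin n) (Fin n) ℝ) :
    ∃ C : ℝ, 0 ≤ C ∧ ∀ x y : EuclideanSpace ℝ (Fin n),
      dotProduct (x : Fin n → ℝ) (M.mulVec y) ≤ C * ‖x‖ * ‖y‖ := by
  set L := LinearMap.toContinuousLinearMap (toEuclideanLin M)
  refine ⟨‖L‖, norm_nonneg _, fun x y => ?_⟩
  rw [dot_eq_inner']
  calc @inner ℝ _ _ x ((toEuclideanLin M) y) ≤ ‖x‖ * ‖(toEuclideanLin M) y‖ :=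
        real_inner_le_norm _ _
    _ ≤ ‖x‖ * (‖L‖ * ‖y‖) := by
        have : ‖(toEuclideanLin M) y‖ = ‖L y‖ := rfl
        rw [this]
        exact mul_le_mul_of_nonneg_left (L.le_opNorm y) (norm_nonneg x)
    _ = ‖L‖ * ‖x‖ * ‖y‖ := by ring

lemma qf_smul (M : Matrix (Fin n) (Fin n) ℝ) (a : ℝ) (x : EuclideanSpace ℝ (Fin n)) :
    dotProduct ((a • x : EuclideanSpace ℝ (Fin n)) : Fin n → ℝ) (M.mulVec (a • x))
      = a^2 * dotProduct (x : Fin n → ℝ) (M.mulVec x) := by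
  have h1 : ((a • x : EuclideanSpace ℝ (Fin n)) : Fin n → ℝ) = a • (x : Fin n → ℝ) := rfl
  rw [h1, mulVec_smul, smul_dotProduct, dotProduct_smul]
  simp [smul_eq_mul]; ring

lemma exists_pos_lower (M : Matrix (Fin n) (Fin n) ℝ)
    (W : Submodule ℝ (EuclideanSpace ℝ (Fin n)))
    (h : ∀ x : EuclideanSpace ℝ (Fin n), x ∈ W → x ≠ 0 →
      0 < dotProduct (x : Fin n → ℝ) (M.mulVec x)) :
    ∃ c : ℝ, 0 < c ∧ ∀ x : EuclideanSpace ℝ (Fin n), x ∈ W →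
      c * ‖x‖^2 ≤ dotProduct (x : Fin n → ℝ) (M.mulVec x) := by
  rcases eq_or_ne W ⊥ with rfl | hW
  · refine ⟨1, one_pos, fun x hx => ?_⟩
    rw [Submodule.mem_bot] at hx
    subst hx
    simp
  · haveI : Nontrivial ↥W := Submodule.nontrivial_iff_ne_bot.2 hW
    have hcpt : IsCompact (Metric.sphere (0:↥W) 1) := isCompact_sphere _ _
    have hne : (Metric.sphere (0:↥W) 1).Nonempty := NormedSpace.sphere_nonempty.2 zero_le_one
    have hcont : Continuous fun y : ↥W =>
        dotProduct ((y : EuclideanSpace ℝ (Fin n)) : Fin n → ℝ) (M.mulVec y) := by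
      have : Continuous fun x : EuclideanSpace ℝ (Fin n) =>
          dotProduct (x : Fin n → ℝ) (M.mulVec x) := by
        have : (fun x : EuclideanSpace ℝ (Fin n) => dotProduct (x : Fin n → ℝ) (M.mulVec x))
            = fun x => @inner ℝ _ _ x ((LinearMap.toContinuousLinearMap (toEuclideanLin M)) x) := by
          funext x; rw [dot_eq_inner']; rfl
        rw [this]
        exact Continuous.inner continuous_id
          ((LinearMap.toContinuousLinearMap (toEuclideanLin M)).continuous)
      exact this.comp continuous_subtype_val
    obtain ⟨y₀, hy₀mem, hy₀min'⟩ := hcpt.exists_isMinOn hne hcont.continuousOn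
    have hy₀min : ∀ z ∈ Metric.sphere (0:↥W) 1, (fun y : ↥W =>
        dotProduct ((y : EuclideanSpace ℝ (Fin n)) : Fin n → ℝ) (M.mulVec y)) y₀ ≤
        dotProduct ((z : EuclideanSpace ℝ (Fin n)) : Fin n → ℝ) (M.mulVec z) :=
      fun z hz => hy₀min' hz
    have hy₀norm : ‖(y₀ : EuclideanSpace ℝ (Fin n))‖ = 1 := by
      have h1 : ‖y₀‖ = 1 := mem_sphere_zero_iff_norm.1 hy₀mem
      rw [← Submodule.norm_coe] at h1
      exact h1
    have hy₀ne : (y₀ : EuclideanSpace ℝ (Fin n)) ≠ 0 := by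
      intro h0; rw [h0] at hy₀norm; simp at hy₀norm
    set c := dotProduct ((y₀ : EuclideanSpace ℝ (Fin n)) : Fin n → ℝ) (M.mulVec y₀) with hc
    have hcpos : 0 < c := h _ y₀.2 hy₀ne
    refine ⟨c, hcpos, fun x hxW => ?_⟩
    rcases eq_or_ne x 0 with rfl | hx0
    · simp
    · have hxn : (0:ℝ) < ‖x‖ := norm_pos_iff.2 hx0
      set u : EuclideanSpace ℝ (Fin n) := ‖x‖⁻¹ • x with hu
      have huW : u ∈ W := W.smul_mem _ hxW
      have hun : ‖u‖ = 1 := by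
        rw [hu, norm_smul]; simp [abs_of_pos (inv_pos.2 hxn), inv_mul_cancel₀ hxn.ne']
      have humem : (⟨u, huW⟩ : ↥W) ∈ Metric.sphere (0:↥W) 1 := by
        rw [mem_sphere_zero_iff_norm]
        exact hun
      have hmin : c ≤ dotProduct (u : Fin n → ℝ) (M.mulVec u) := hy₀min _ humem
      have hqu : dotProduct (u : Fin n → ℝ) (M.mulVec u)
          = ‖x‖⁻¹^2 * dotProduct (x : Fin n → ℝ) (M.mulVec x) := qf_smul M _ x
      rw [hqu] at hmin
      have : c * ‖x‖^2 ≤ (‖x‖⁻¹^2 * dotProduct (x : Fin n → ℝ) (M.mulVec x)) * ‖x‖^2 :=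
        mul_le_mul_of_nonneg_right hmin (sq_nonneg _)
      calc c * ‖x‖^2 ≤ _ := this
        _ = dotProduct (x : Fin n → ℝ) (M.mulVec x) := by
            field_simp
lemma mem_kerEu {M : Matrix (Fin n) (Fin n) ℝ} {x : EuclideanSpace ℝ (Fin n)} :
    x ∈ LinearMap.ker (toEuclideanLin M) ↔ M.mulVec x = 0 := by
  rw [LinearMap.mem_ker]
  exact ⟨fun h => by have := congrArg WithLp.ofLp h; exact this,
    fun h => by rw [toEuclideanLin_apply, h]; rfl⟩

lemma isSymm_of_isHermitian' {A : Matrix (Fin n) (Fin n) ℝ} (h : A.IsHermitian) : A.IsSymm := by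
  rw [Matrix.IsSymm, ← conjTranspose_eq_transpose_of_trivial, h.eq]

lemma isHermitian_of_isSymm' {A : Matrix (Fin n) (Fin n) ℝ} (h : A.IsSymm) : A.IsHermitian := by
  rw [Matrix.IsHermitian, conjTranspose_eq_transpose_of_trivial]; exact h

lemma dot_mulVec_symm {M : Matrix (Fin n) (Fin n) ℝ} (hM : M.IsSymm) (x y : Fin n → ℝ) :
    dotProduct x (M *ᵥ y) = dotProduct (M *ᵥ x) y := by
  rw [Matrix.dotProduct_mulVec, ← Matrix.mulVec_transpose, hM.eq]



section Main

set_option maxHeartbeats 1000000 in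
/-- If `E, F, G` are symmetric, `F ≠ 0`, `F ⪰ 0`, `G ⪰ 0`, `ker G ⊆ ker F ∩ ker E`, and `P`
is the orthogonal projection onto `ker F`, then there is `ε < 0` such that for every
`δ ∈ [ε, 0)` there is `λ_δ < 0` with `μ₊(E + λ F + δ G) = μ₊(P E P)` for all `λ ≤ λ_δ`. -/
theorem posIdx_perturbation {n : ℕ} (E F G P : Matrix (Fin n) (Fin n) ℝ)
    (hE : E.IsSymm) (hFne : F ≠ 0) (hF : F.PosSemidef) (hG : G.PosSemidef)
    (hker : LinearMap.ker G.mulVecLin ≤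
      LinearMap.ker F.mulVecLin ⊓ LinearMap.ker E.mulVecLin)
    (hPsymm : P.IsSymm) (hPidem : P * P = P)
    (hPrange : LinearMap.range P.mulVecLin = LinearMap.ker F.mulVecLin) :
    ∃ ε : ℝ, ε < 0 ∧ ∀ δ : ℝ, ε ≤ δ → δ < 0 →
      ∃ lamδ : ℝ, lamδ < 0 ∧ ∀ lam : ℝ, lam ≤ lamδ →
        posIdx (E + lam • F + δ • G) = posIdx (P * E * P) := by
  classical
  -- pointwise matrix facts
  have hGK : ∀ x : Fin n → ℝ, G *ᵥ x = 0 → F *ᵥ x = 0 ∧ E *ᵥ x = 0 := by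
    intro x hx
    have hmem : x ∈ LinearMap.ker G.mulVecLin := by
      rw [LinearMap.mem_ker, mulVecLin_apply]; exact hx
    have := hker hmem
    rw [Submodule.mem_inf, LinearMap.mem_ker, LinearMap.mem_ker, mulVecLin_apply,
      mulVecLin_apply] at this
    exact this
  have hPmem : ∀ x : Fin n → ℝ, F *ᵥ (P *ᵥ x) = 0 := by
    intro x
    have hr : P *ᵥ x ∈ LinearMap.range P.mulVecLin := ⟨x, by rw [mulVecLin_apply]⟩
    rw [hPrange, LinearMap.mem_ker, mulVecLin_apply] at hr
    exact hr
  have hPfix : ∀ x : Fin n → ℝ, F *ᵥ x = 0 → P *ᵥ x = x := by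
    intro x hx
    have hx' : x ∈ LinearMap.range P.mulVecLin := by
      rw [hPrange, LinearMap.mem_ker, mulVecLin_apply]; exact hx
    obtain ⟨z, hz⟩ := hx'
    rw [mulVecLin_apply] at hz
    rw [← hz, mulVec_mulVec, hPidem]
  -- hermitian facts
  have hEh : E.IsHermitian := isHermitian_of_isSymm' hE
  have hPh : P.IsHermitian := isHermitian_of_isSymm' hPsymm
  have hPEPh : (P * E * P).IsHermitian := by
    rw [Matrix.IsHermitian, conjTranspose_mul, conjTranspose_mul, hEh.eq, hPh.eq, mul_assoc]
  have hAsymm : ∀ lam δ : ℝ, (E + lam • F + δ • G).IsSymm := by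
    intro lam δ
    rw [Matrix.IsSymm, transpose_add, transpose_add, transpose_smul, transpose_smul,
      hE.eq, (isSymm_of_isHermitian' hF.1).eq, (isSymm_of_isHermitian' hG.1).eq]
  have hAh : ∀ lam δ : ℝ, (E + lam • F + δ • G).IsHermitian := fun lam δ =>
    isHermitian_of_isSymm' (hAsymm lam δ)
  -- subspaces
  set V : Submodule ℝ (EuclideanSpace ℝ (Fin n)) := LinearMap.ker (toEuclideanLin F) with hV
  set K : Submodule ℝ (EuclideanSpace ℝ (Fin n)) := LinearMap.ker (toEuclideanLin G) with hK
  obtain ⟨Wp', Wm', hWp'rank, hWm'rank, hWp'pos, hWm'nonpos, hWm'ker⟩ :=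
    spectral_subspaces hPEPh
  set Wp : Submodule ℝ (EuclideanSpace ℝ (Fin n)) := Submodule.map (toEuclideanLin P) Wp'
    with hWp
  set V₀ : Submodule ℝ (EuclideanSpace ℝ (Fin n)) := K ⊔ (Wm' ⊓ V) with hV₀
  set p := posIdx (P * E * P) with hp
  have hKV : K ≤ V := by
    intro x hx
    rw [hK, mem_kerEu] at hx
    rw [hV, mem_kerEu]
    exact (hGK x hx).1
  have hKE : ∀ x : EuclideanSpace ℝ (Fin n), x ∈ K → E *ᵥ x = 0 := by
    intro x hx
    rw [hK, mem_kerEu] at hx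
    exact (hGK x hx).2
  have hV₀V : V₀ ≤ V := sup_le hKV inf_le_right
  -- the quadratic form of P*E*P
  have hq_pep : ∀ x : EuclideanSpace ℝ (Fin n),
      dotProduct (x : Fin n → ℝ) ((P * E * P) *ᵥ x)
        = dotProduct (P *ᵥ x : Fin n → ℝ) (E *ᵥ (P *ᵥ x)) := by
    intro x
    rw [← mulVec_mulVec, ← mulVec_mulVec, dot_mulVec_symm hPsymm]
  -- membership in Wp
  have hWpmem : ∀ y : EuclideanSpace ℝ (Fin n), y ∈ Wp →
      ∃ x : EuclideanSpace ℝ (Fin n), x ∈ Wp' ∧ (y : Fin n → ℝ) = P *ᵥ x := by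
    intro y hy
    obtain ⟨x, hx, hxy⟩ := Submodule.mem_map.1 hy
    exact ⟨x, hx, by rw [← hxy, toEuclideanLin_apply]⟩
  have hWpV : ∀ y : EuclideanSpace ℝ (Fin n), y ∈ Wp → F *ᵥ y = 0 := by
    intro y hy
    obtain ⟨x, _, hxy⟩ := hWpmem y hy
    rw [hxy]
    exact hPmem x
  have hWpEpos : ∀ y : EuclideanSpace ℝ (Fin n), y ∈ Wp → y ≠ 0 →
      0 < dotProduct (y : Fin n → ℝ) (E *ᵥ y) := by
    intro y hy hy0
    obtain ⟨x, hx, hxy⟩ := hWpmem y hy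
    have hx0 : x ≠ 0 := by
      intro h; apply hy0
      apply PiLp.ext
      intro i
      have : (y : Fin n → ℝ) = P *ᵥ (0 : Fin n → ℝ) := by rw [hxy, h]; rfl
      rw [this, mulVec_zero]; rfl
    have := hWp'pos x hx hx0
    rw [hq_pep x] at this
    rw [hxy]
    exact this
  -- rank of Wp
  have hWprank : finrank ℝ Wp = p := by
    have hker0 : LinearMap.ker ((toEuclideanLin P).domRestrict Wp') = ⊥ := by
      rw [Submodule.eq_bot_iff]
      rintro ⟨x, hx⟩ hx0
      rw [LinearMap.mem_ker, LinearMap.domRestrict_apply] at hx0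
      have hPx : P *ᵥ x = 0 := by
        have : (toEuclideanLin P) x = 0 := hx0
        rw [toEuclideanLin_apply] at this
        exact congrArg (WithLp.equiv 2 (Fin n → ℝ)) this
      have hq0 : dotProduct (x : Fin n → ℝ) ((P * E * P) *ᵥ x) = 0 := by
        rw [hq_pep x, hPx]; simp
      have hx00 : x = 0 := by
        by_contra hne
        exact absurd hq0 (ne_of_gt (hWp'pos x hx hne))
      exact Subtype.ext hx00
    have hrn := LinearMap.finrank_range_add_finrank_ker ((toEuclideanLin P).domRestrict Wp')
    rw [hker0, finrank_bot, add_zero, LinearMap.range_domRestrict] at hrn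
    rw [hWp, hrn, hWp'rank]

  have hFsymm : F.IsSymm := isSymm_of_isHermitian' hF.1
  -- E is non-positive on V₀
  have hV₀E : ∀ y : EuclideanSpace ℝ (Fin n), y ∈ V₀ →
      dotProduct (y : Fin n → ℝ) (E *ᵥ y) ≤ 0 := by
    intro y hy
    rw [hV₀] at hy
    obtain ⟨k, hk, m', hm', rfl⟩ := Submodule.mem_sup.1 hy
    have hEk : E *ᵥ (k : Fin n → ℝ) = 0 := hKE k hk
    have hm'V : m' ∈ V := hm'.2
    have hm'W : m' ∈ Wm' := hm'.1
    have hFm' : F *ᵥ (m' : Fin n → ℝ) = 0 := by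
      rw [hV, mem_kerEu] at hm'V; exact hm'V
    have hPm' : P *ᵥ (m' : Fin n → ℝ) = m' := hPfix m' hFm'
    have hcast : ((k + m' : EuclideanSpace ℝ (Fin n)) : Fin n → ℝ)
        = (k : Fin n → ℝ) + (m' : Fin n → ℝ) := rfl
    rw [hcast, mulVec_add, hEk, zero_add, add_dotProduct]
    have h1 : dotProduct (k : Fin n → ℝ) (E *ᵥ m') = 0 := by
      rw [dot_mulVec_symm hE, hEk, zero_dotProduct]
    rw [h1, zero_add]
    have h2 := hWm'nonpos m' hm'W
    rw [hq_pep m', hPm'] at h2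
    exact h2
  -- constants for the lower bound
  obtain ⟨m, hm, hmle⟩ := exists_pos_lower E Wp hWpEpos
  obtain ⟨Cg, hCg, hCgle⟩ := exists_bilin_bound G
  have hCg1 : (0:ℝ) < Cg + 1 := by linarith
  refine ⟨-(m / (Cg + 1)), neg_lt_zero.2 (div_pos hm hCg1), ?_⟩
  intro δ hδε hδ0
  -- G is positive definite on V₁ := Kᗮ ⊓ V₀
  have hV₁G : ∀ y : EuclideanSpace ℝ (Fin n), y ∈ Kᗮ ⊓ V₀ → y ≠ 0 →
      0 < dotProduct (y : Fin n → ℝ) (G *ᵥ y) := by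
    intro y hy hy0
    have h0 : 0 ≤ dotProduct (y : Fin n → ℝ) (G *ᵥ y) := by
      have := hG.dotProduct_mulVec_nonneg (y : Fin n → ℝ); simpa using this
    rcases h0.lt_or_eq with h | h
    · exact h
    · exfalso
      have hGy : G *ᵥ (y : Fin n → ℝ) = 0 := by
        have := (hG.dotProduct_mulVec_zero_iff (y : Fin n → ℝ)).1 (by simpa using h.symm)
        exact this
      have hyK : y ∈ K := by rw [hK, mem_kerEu]; exact hGy
      have hmem : y ∈ K ⊓ Kᗮ := ⟨hyK, hy.1⟩
      rw [Submodule.inf_orthogonal_eq_bot, Submodule.mem_bot] at hmem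
      exact hy0 hmem
  -- F is positive definite on Vᗮ
  have hVpF : ∀ z : EuclideanSpace ℝ (Fin n), z ∈ Vᗮ → z ≠ 0 →
      0 < dotProduct (z : Fin n → ℝ) (F *ᵥ z) := by
    intro z hz hz0
    have h0 : 0 ≤ dotProduct (z : Fin n → ℝ) (F *ᵥ z) := by
      have := hF.dotProduct_mulVec_nonneg (z : Fin n → ℝ); simpa using this
    rcases h0.lt_or_eq with h | h
    · exact h
    · exfalso
      have hFz : F *ᵥ (z : Fin n → ℝ) = 0 :=
        (hF.dotProduct_mulVec_zero_iff (z : Fin n → ℝ)).1 (by simpa using h.symm)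
      have hzV : z ∈ V := by rw [hV, mem_kerEu]; exact hFz
      have hmem : z ∈ V ⊓ Vᗮ := ⟨hzV, hz⟩
      rw [Submodule.inf_orthogonal_eq_bot, Submodule.mem_bot] at hmem
      exact hz0 hmem
  obtain ⟨g, hg, hgle⟩ := exists_pos_lower G (Kᗮ ⊓ V₀) hV₁G
  obtain ⟨f, hf, hfle⟩ := exists_pos_lower F Vᗮ hVpF
  obtain ⟨CE, hCE, hCEle⟩ := exists_bilin_bound (E + δ • G)
  set c₁ : ℝ := -δ * g with hc₁def
  have hc₁ : 0 < c₁ := mul_pos (neg_pos.2 hδ0) hg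
  refine ⟨-((CE + CE^2/c₁ + 1)/f), neg_lt_zero.2 (div_pos (by positivity) hf), ?_⟩
  intro lam hlam
  have hlam0 : lam < 0 :=
    lt_of_le_of_lt hlam (neg_lt_zero.2 (div_pos (by positivity) hf))
  -- expansion of the quadratic form of A := E + lam • F + δ • G
  have hAexp : ∀ x w : Fin n → ℝ, dotProduct x ((E + lam • F + δ • G) *ᵥ w)
      = dotProduct x (E *ᵥ w) + lam * dotProduct x (F *ᵥ w) + δ * dotProduct x (G *ᵥ w) := by
    intro x w
    rw [add_mulVec, add_mulVec, smul_mulVec, smul_mulVec,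
      dotProduct_add, dotProduct_add, dotProduct_smul, dotProduct_smul]
    simp [smul_eq_mul]
  have hEGexp : ∀ x w : Fin n → ℝ, dotProduct x ((E + δ • G) *ᵥ w)
      = dotProduct x (E *ᵥ w) + δ * dotProduct x (G *ᵥ w) := by
    intro x w
    rw [add_mulVec, smul_mulVec, dotProduct_add, dotProduct_smul]
    simp [smul_eq_mul]
  -- LOWER BOUND : p ≤ posIdx A
  have hlow : p ≤ posIdx (E + lam • F + δ • G) := by
    rw [← hWprank]
    apply le_posIdx (hAh lam δ) Wp
    intro y hy hy0
    have hFy : F *ᵥ (y : Fin n → ℝ) = 0 := hWpV y hy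
    have hEy : m * ‖y‖^2 ≤ dotProduct (y : Fin n → ℝ) (E *ᵥ y) := hmle y hy
    have hGy0 : (0:ℝ) ≤ dotProduct (y : Fin n → ℝ) (G *ᵥ y) := by
      have := hG.dotProduct_mulVec_nonneg (y : Fin n → ℝ); simpa using this
    have hGyC : dotProduct (y : Fin n → ℝ) (G *ᵥ y) ≤ Cg * ‖y‖ * ‖y‖ := hCgle y y
    have hs : (0:ℝ) < ‖y‖ := norm_pos_iff.2 hy0
    rw [hAexp, hFy]
    simp only [dotProduct_zero, mul_zero, add_zero]
    have h1 : δ * (Cg * ‖y‖ * ‖y‖) ≤ δ * dotProduct (y : Fin n → ℝ) (G *ᵥ y) :=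
      mul_le_mul_of_nonpos_left hGyC hδ0.le
    have h2 : (-(m / (Cg + 1))) * (Cg * ‖y‖ * ‖y‖) ≤ δ * (Cg * ‖y‖ * ‖y‖) :=
      mul_le_mul_of_nonneg_right hδε (by positivity)
    have hfrac : m / (Cg + 1) * Cg < m := by
      rw [div_mul_eq_mul_div, div_lt_iff₀ hCg1]
      nlinarith
    nlinarith [mul_pos hs hs, mul_pos hm (mul_pos hs hs)]
  -- UPPER BOUND : posIdx A ≤ p
  have hAsy : (E + lam • F + δ • G).IsSymm := hAsymm lam δ
  have hUq : ∀ u : EuclideanSpace ℝ (Fin n), u ∈ V₀ ⊔ Vᗮ →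
      dotProduct (u : Fin n → ℝ) ((E + lam • F + δ • G) *ᵥ u) ≤ 0 := by
    intro u hu
    obtain ⟨v, hv, z, hz, rfl⟩ := Submodule.mem_sup.1 hu
    have hdec : K ⊔ (Kᗮ ⊓ V₀) = V₀ :=
      Submodule.sup_orthogonal_inf_of_hasOrthogonalProjection (le_sup_left : K ≤ V₀)
    rw [← hdec] at hv
    obtain ⟨w, hw, y, hy, rfl⟩ := Submodule.mem_sup.1 hv
    -- kernel vector w
    have hGw : G *ᵥ (w : Fin n → ℝ) = 0 := by
      have := hw; rw [hK, mem_kerEu] at this; exact this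
    have hFw : F *ᵥ (w : Fin n → ℝ) = 0 := (hGK w hGw).1
    have hEw : E *ᵥ (w : Fin n → ℝ) = 0 := (hGK w hGw).2
    have hAw : (E + lam • F + δ • G) *ᵥ (w : Fin n → ℝ) = 0 := by
      rw [add_mulVec, add_mulVec, smul_mulVec, smul_mulVec, hEw, hFw, hGw]
      simp
    have hyV₀ : y ∈ V₀ := hy.2
    have hyV : y ∈ V := hV₀V hyV₀
    have hFy : F *ᵥ (y : Fin n → ℝ) = 0 := by
      rw [hV, mem_kerEu] at hyV; exact hyV
    -- quadratic bounds
    have hEy : dotProduct (y : Fin n → ℝ) (E *ᵥ y) ≤ 0 := hV₀E y hyV₀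
    have hGy : g * ‖y‖^2 ≤ dotProduct (y : Fin n → ℝ) (G *ᵥ y) := hgle y hy
    have hFz : f * ‖z‖^2 ≤ dotProduct (z : Fin n → ℝ) (F *ᵥ z) := hfle z hz
    have hGz : (0:ℝ) ≤ dotProduct (z : Fin n → ℝ) (G *ᵥ z) := by
      have := hG.dotProduct_mulVec_nonneg (z : Fin n → ℝ); simpa using this
    -- bound on q(y)
    have hqy : dotProduct (y : Fin n → ℝ) ((E + lam • F + δ • G) *ᵥ y)
        ≤ -c₁ * ‖y‖^2 := by
      rw [hAexp, hFy]
      simp only [dotProduct_zero, mul_zero, add_zero]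
      have h1 : δ * dotProduct (y : Fin n → ℝ) (G *ᵥ y) ≤ δ * (g * ‖y‖^2) :=
        mul_le_mul_of_nonpos_left hGy hδ0.le
      have h2 : δ * (g * ‖y‖^2) = -c₁ * ‖y‖^2 := by rw [hc₁def]; ring
      linarith
    -- bound on the cross term
    have hcross : dotProduct (y : Fin n → ℝ) ((E + lam • F + δ • G) *ᵥ z)
        ≤ CE * ‖y‖ * ‖z‖ := by
      rw [hAexp]
      have hFyz : dotProduct (y : Fin n → ℝ) (F *ᵥ z) = 0 := by
        rw [dot_mulVec_symm hFsymm, hFy, zero_dotProduct]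
      rw [hFyz, mul_zero, add_zero]
      have := hCEle y z
      rw [hEGexp] at this
      exact this
    -- bound on q(z)
    have hqz : dotProduct (z : Fin n → ℝ) ((E + lam • F + δ • G) *ᵥ z)
        ≤ CE * ‖z‖ * ‖z‖ + lam * (f * ‖z‖^2) := by
      rw [hAexp]
      have h1 : dotProduct (z : Fin n → ℝ) (E *ᵥ z)
          + δ * dotProduct (z : Fin n → ℝ) (G *ᵥ z) ≤ CE * ‖z‖ * ‖z‖ := by
        have := hCEle z z
        rw [hEGexp] at this
        exact this
      have h2 : lam * dotProduct (z : Fin n → ℝ) (F *ᵥ z) ≤ lam * (f * ‖z‖^2) :=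
        mul_le_mul_of_nonpos_left hFz hlam0.le
      linarith
    -- expansion of the full quadratic form
    have hsum : dotProduct ((w + y + z : EuclideanSpace ℝ (Fin n)) : Fin n → ℝ)
        ((E + lam • F + δ • G) *ᵥ (w + y + z : EuclideanSpace ℝ (Fin n)))
        = dotProduct (y : Fin n → ℝ) ((E + lam • F + δ • G) *ᵥ y)
          + 2 * dotProduct (y : Fin n → ℝ) ((E + lam • F + δ • G) *ᵥ z)
          + dotProduct (z : Fin n → ℝ) ((E + lam • F + δ • G) *ᵥ z) := by
      have hcast : ((w + y + z : EuclideanSpace ℝ (Fin n)) : Fin n → ℝ)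
          = (w : Fin n → ℝ) + (y : Fin n → ℝ) + (z : Fin n → ℝ) := rfl
      rw [hcast, mulVec_add, mulVec_add, hAw, zero_add]
      have hwy : dotProduct ((w : Fin n → ℝ)) ((E + lam • F + δ • G) *ᵥ y) = 0 := by
        rw [dot_mulVec_symm hAsy, hAw, zero_dotProduct]
      have hwz : dotProduct ((w : Fin n → ℝ)) ((E + lam • F + δ • G) *ᵥ z) = 0 := by
        rw [dot_mulVec_symm hAsy, hAw, zero_dotProduct]
      have hzy : dotProduct ((z : Fin n → ℝ)) ((E + lam • F + δ • G) *ᵥ y)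
          = dotProduct ((y : Fin n → ℝ)) ((E + lam • F + δ • G) *ᵥ z) := by
        rw [dot_mulVec_symm hAsy, dotProduct_comm]
      rw [add_dotProduct, add_dotProduct, dotProduct_add, dotProduct_add, dotProduct_add,
        hwy, hwz, hzy]
      ring
    rw [hsum]
    -- key inequality on lam
    have hkey : lam * f ≤ -(CE + CE^2/c₁ + 1) := by
      have h1 : lam * f ≤ (-((CE + CE^2/c₁ + 1)/f)) * f :=
        mul_le_mul_of_nonneg_right hlam hf.le
      rw [neg_mul, div_mul_cancel₀ _ hf.ne'] at h1
      exact h1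
    have hD : c₁ * (CE^2/c₁) = CE^2 := mul_div_cancel₀ _ hc₁.ne'
    have ha : (0:ℝ) ≤ ‖y‖ := norm_nonneg _
    have hb : (0:ℝ) ≤ ‖z‖ := norm_nonneg _
    have hkey2 : lam * (f * ‖z‖^2) ≤ (-(CE + CE^2/c₁ + 1)) * ‖z‖^2 := by
      have := mul_le_mul_of_nonneg_right hkey (sq_nonneg ‖z‖)
      calc lam * (f * ‖z‖^2) = lam * f * ‖z‖^2 := by ring
        _ ≤ _ := this
    nlinarith [sq_nonneg (c₁ * ‖y‖ - CE * ‖z‖), sq_nonneg ‖z‖, sq_nonneg ‖y‖,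
      mul_pos hc₁ hc₁, hqy, hcross, hqz, hkey2, hD,
      mul_le_mul_of_nonneg_left hkey2 hc₁.le]
  have hup := posIdx_add_le (hAh lam δ) (V₀ ⊔ Vᗮ) hUq
  -- dimension bookkeeping
  have d1 : finrank ℝ ↥(V₀ ⊔ Vᗮ) + finrank ℝ ↥(V₀ ⊓ Vᗮ)
      = finrank ℝ ↥V₀ + finrank ℝ ↥Vᗮ := Submodule.finrank_sup_add_finrank_inf_eq V₀ Vᗮ
  have d2 : V₀ ⊓ Vᗮ = ⊥ := by
    rw [eq_bot_iff]
    intro x hx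
    have : x ∈ V ⊓ Vᗮ := ⟨hV₀V hx.1, hx.2⟩
    rw [Submodule.inf_orthogonal_eq_bot] at this
    exact this
  have d3 : finrank ℝ ↥V + finrank ℝ ↥Vᗮ = n := by
    have := Submodule.finrank_add_finrank_orthogonal V
    rwa [finrank_euclideanSpace, Fintype.card_fin] at this
  have d4 : finrank ℝ ↥(Wm' ⊔ V) + finrank ℝ ↥(Wm' ⊓ V)
      = finrank ℝ ↥Wm' + finrank ℝ ↥V := Submodule.finrank_sup_add_finrank_inf_eq Wm' V
  have d5 : finrank ℝ ↥(Wm' ⊔ V) ≤ n := by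
    have := Submodule.finrank_le (Wm' ⊔ V)
    rwa [finrank_euclideanSpace, Fintype.card_fin] at this
  have d6 : finrank ℝ ↥(Wm' ⊓ V) ≤ finrank ℝ ↥V₀ :=
    Submodule.finrank_mono le_sup_right
  rw [d2, finrank_bot] at d1
  omega

end Main
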